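/- For every positive integer m, the power sum S_m(n) = 1^m + ... + n^m can be written as an even or odd polynomial in N = n + 1/2 according to the parity of m: there exist rational numbers f_{m,j} such that S_{2m-1}(n) = Σ_{j=0}^{m} f_{2m-1,j} · (n + 1/2)^{2j} and S_{2m}(n) = Σ_{j=0}^{m} f_{2m,j} · (n + 1/2)^{2j+1}, for all n ≥ 1. -/
import Mathlib
open Polynomial Finset

lemma pairsum (f : ℕ → ℚ) (M : ℕ) :
    ∑ j ∈ range (2*M), f j = ∑ j ∈ range M, (f (2*j) + f (2*j+1)) := by
  induction M with
  | zero => simp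
  | succ M ih =>
    rw [show 2*(M+1) = (2*M+1)+1 by ring, Finset.sum_range_succ, Finset.sum_range_succ,
      Finset.sum_range_succ, ih]
    ring
lemma coeff_comp_neg (Q : ℚ[X]) (j : ℕ) : (Q.comp (-X)).coeff j = (-1)^j * Q.coeff j := by
  induction Q using Polynomial.induction_on' with
  | add p q hp hq => simp [add_comp, hp, hq, mul_add]
  | monomial n a =>
      have h1 : ((-1 : ℚ[X])^n) = C ((-1:ℚ)^n) := by simp
      rw [monomial_comp, neg_pow, h1, mul_comm (C ((-1:ℚ)^n)), ← mul_assoc, mul_comm (C a),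
        mul_assoc, ← C_mul, coeff_mul_C, coeff_X_pow, coeff_monomial]
      rcases eq_or_ne n j with h | h
      · subst h; simp [mul_comm]
      · simp [h, Ne.symm h]
lemma icc_shift (f : ℕ → ℚ) (n : ℕ) : ∑ k ∈ Icc 1 n, f k = ∑ i ∈ range n, f (1+i) := by
  rw [← Finset.Ico_add_one_right_eq_Icc, Finset.sum_Ico_eq_sum_range]; simp

lemma key (p n : ℕ) : ((n:ℚ)+1/2)^(p+1) - (1/2)^(p+1)
    = ∑ i ∈ range (p+2), ((1/2:ℚ)^(p+1-i) - (-1/2:ℚ)^(p+1-i)) * (p+1).choose i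
        * ∑ k ∈ Icc 1 n, (k:ℚ)^i := by
  have tel := Finset.sum_range_sub (fun k : ℕ => ((k:ℚ)+1/2)^(p+1)) n
  simp only [Nat.cast_zero] at tel
  rw [show ((0:ℚ)) + 1/2 = 1/2 by norm_num] at tel
  rw [← tel]
  have expand : ∀ k ∈ range n, (((k+1:ℕ):ℚ)+1/2)^(p+1) - ((k:ℚ)+1/2)^(p+1)
      = ∑ i ∈ range (p+2), ((k:ℚ)+1)^i * ((1/2:ℚ)^(p+1-i) - (-1/2:ℚ)^(p+1-i)) * (p+1).choose i := by
    intro k _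
    have h1 := add_pow ((k:ℚ)+1) (1/2) (p+1)
    have h2 := add_pow ((k:ℚ)+1) (-1/2) (p+1)
    have e1 : ((k:ℚ)+1) + 1/2 = ((k+1:ℕ):ℚ)+1/2 := by push_cast; ring
    have e2 : ((k:ℚ)+1) + (-1/2) = (k:ℚ)+1/2 := by ring
    rw [e1] at h1; rw [e2] at h2
    rw [h1, h2, ← Finset.sum_sub_distrib]
    apply Finset.sum_congr rfl; intro i _; ring
  rw [Finset.sum_congr rfl expand, Finset.sum_comm]
  apply Finset.sum_congr rfl; intro i _
  rw [icc_shift (fun k => (k:ℚ)^i), Finset.mul_sum]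
  apply Finset.sum_congr rfl; intro k _
  push_cast; ring

lemma lemA (p : ℕ) : ∃ Q : ℚ[X], Q.natDegree ≤ p + 1 ∧
    ∀ n : ℕ, Q.eval ((n:ℚ) + 1/2) = ∑ k ∈ Finset.Icc 1 n, (k:ℚ)^p := by
  induction p using Nat.strong_induction_on with
  | _ p IH =>
  choose G hGdeg hGeval using IH
  set c : ℕ → ℚ := fun i => ((1/2:ℚ)^(p+1-i) - (-1/2:ℚ)^(p+1-i)) * (p+1).choose i with hc
  refine ⟨C (((p:ℚ)+1)⁻¹) * (X^(p+1) - C ((1/2:ℚ)^(p+1))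
      - ∑ i ∈ (range p).attach, C (c i) * G i (mem_range.mp i.2)), ?_, ?_⟩
  · apply le_trans (natDegree_mul_le)
    rw [natDegree_C, zero_add]
    apply le_trans (natDegree_sub_le _ _)
    apply max_le
    · apply le_trans (natDegree_sub_le _ _)
      simp [natDegree_X_pow]
    · apply natDegree_sum_le_of_forall_le
      intro i _
      apply le_trans (natDegree_mul_le)
      rw [natDegree_C, zero_add]
      exact le_trans (hGdeg i (mem_range.mp i.2)) (by have := mem_range.mp i.2; omega)
  · intro n
    have hk := key p n
    have hsplit : ∑ i ∈ range (p+2), c i * ∑ k ∈ Icc 1 n, (k:ℚ)^i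
        = (∑ i ∈ range p, c i * ∑ k ∈ Icc 1 n, (k:ℚ)^i)
          + ((p:ℚ)+1) * ∑ k ∈ Icc 1 n, (k:ℚ)^p := by
      rw [show p + 2 = (p+1)+1 by ring, Finset.sum_range_succ, Finset.sum_range_succ]
      have hz : c (p+1) = 0 := by simp [hc]
      have hp' : c p = (p:ℚ)+1 := by
        simp only [hc]
        rw [Nat.add_sub_cancel_left, Nat.choose_succ_self_right]
        push_cast; ring
      rw [hz, hp']; ring
    have hk2 : ((n:ℚ)+1/2)^(p+1) - (1/2)^(p+1)
        = (∑ i ∈ range p, c i * ∑ k ∈ Icc 1 n, (k:ℚ)^i)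
          + ((p:ℚ)+1) * ∑ k ∈ Icc 1 n, (k:ℚ)^p := by
      rw [hk, ← hsplit]
    simp only [eval_mul, eval_sub, eval_pow, eval_C, eval_X, eval_finset_sum]
    simp only [hGeval]
    rw [Finset.sum_attach (range p) (fun j => c j * ∑ k ∈ Icc 1 n, (k:ℚ)^j)]
    have hne : ((p:ℚ)+1) ≠ 0 := by positivity
    have h3 : ((n:ℚ)+1/2)^(p+1) - (1/2)^(p+1)
        - (∑ x ∈ range p, c x * ∑ k ∈ Icc 1 n, (k:ℚ)^x)
        = ((p:ℚ)+1) * ∑ k ∈ Icc 1 n, (k:ℚ)^p := by linarith [hk2]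
    rw [h3, inv_mul_cancel_left₀ hne]

lemma lemB (p : ℕ) (hp : 1 ≤ p) : ∃ Q : ℚ[X], Q.natDegree ≤ p + 1 ∧
    (∀ n : ℕ, Q.eval ((n:ℚ) + 1/2) = ∑ k ∈ Finset.Icc 1 n, (k:ℚ)^p) ∧
    (∀ j : ℕ, j % 2 = p % 2 → Q.coeff j = 0) := by
  obtain ⟨Q, hdeg, hev⟩ := lemA p
  -- difference identity
  have hD : Q - Q.comp (X - C 1) = (X - C (1/2:ℚ))^p := by
    apply eq_of_infinite_eval_eq
    refine Set.infinite_of_injective_forall_mem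
      (f := fun i : ℕ => ((i+1:ℕ):ℚ) + 1/2) ?_ ?_
    · intro a b h
      simp only at h
      have : ((a+1:ℕ):ℚ) = ((b+1:ℕ):ℚ) := by linarith
      exact_mod_cast Nat.succ_injective (Nat.cast_injective this)
    · intro i
      simp only [Set.mem_setOf_eq, eval_sub, eval_comp, eval_X, eval_C, eval_pow]
      have h1 := hev (i+1)
      have h2 := hev i
      have e1 : ((i+1:ℕ):ℚ) + 1/2 - 1 = (i:ℚ) + 1/2 := by push_cast; ring
      have e2 : ((i+1:ℕ):ℚ) + 1/2 - 1/2 = ((i+1:ℕ):ℚ) := by ring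
      rw [e1, e2, h1, h2, Finset.sum_Icc_succ_top (Nat.one_le_iff_ne_zero.mpr (Nat.succ_ne_zero i))]
      ring
  have hDev : ∀ x : ℚ, Q.eval x - Q.eval (x-1) = (x - 1/2)^p := by
    intro x
    have := congrArg (eval x) hD
    simpa [eval_sub, eval_comp, eval_pow] using this
  have hQ32 : Q.eval (3/2) = 1 := by
    have h := hev 1
    rw [show ((1:ℕ):ℚ)+1/2 = 3/2 by norm_num] at h
    simpa using h
  have hQhalf : Q.eval (1/2) = 0 := by
    have := hDev (3/2)
    rw [hQ32] at this
    norm_num at this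
    linarith
  have hQmhalf : Q.eval (-1/2) = 0 := by
    have := hDev (1/2)
    rw [hQhalf] at this
    rw [show (1/2 : ℚ) - 1/2 = 0 by norm_num, zero_pow (by omega : p ≠ 0)] at this
    rw [show (1/2 : ℚ) - 1 = -1/2 by norm_num] at this
    linarith
  set E : ℚ[X] := Q - C ((-1:ℚ)^(p+1)) * Q.comp (-X) with hE
  have hEeval : ∀ x : ℚ, E.eval x = Q.eval x - (-1)^(p+1) * Q.eval (-x) := by
    intro x; simp [hE, eval_comp]
  have hper : ∀ x : ℚ, E.eval x = E.eval (x-1) := by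
    intro x
    rw [hEeval, hEeval]
    have h1 := hDev x
    have h2 := hDev (1-x)
    rw [show (1-x) - 1 = -x by ring] at h2
    rw [show (1-x) - 1/2 = -(x - 1/2) by ring, neg_pow] at h2
    rw [show -(x-1) = -x+1 by ring, show -x + 1 = 1 - x by ring]
    have hone : (-1:ℚ)^(p*2) = 1 := by rw [mul_comm, pow_mul]; norm_num
    linear_combination h1 + (-1:ℚ)^(p+1) * h2 - ((x - 1/2)^p) * hone
  have hnat : ∀ n : ℕ, E.eval (n:ℚ) = E.eval 0 := by
    intro n
    induction n with
    | zero => norm_num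
    | succ n ih =>
      have := hper ((n+1:ℕ):ℚ)
      rw [show ((n+1:ℕ):ℚ) - 1 = (n:ℚ) by push_cast; ring] at this
      rw [this, ih]
  have hEC : E = C (E.eval 0) := by
    apply eq_of_infinite_eval_eq
    refine Set.infinite_of_injective_forall_mem (f := fun i : ℕ => (i:ℚ)) ?_ ?_
    · exact Nat.cast_injective
    · intro i
      simp only [Set.mem_setOf_eq, eval_C]
      exact hnat i
  have hE0 : E.eval 0 = 0 := by
    have h1 : E.eval (1/2) = E.eval 0 := by rw [hEC]; simp
    rw [← h1, hEeval, hQhalf, show -(1/2 : ℚ) = -1/2 by norm_num, hQmhalf]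
    ring
  have hEzero : E = 0 := by rw [hEC, hE0, map_zero]
  refine ⟨Q, hdeg, hev, ?_⟩
  intro j hj
  have hcoeff : E.coeff j = 0 := by rw [hEzero]; simp
  rw [hE, coeff_sub, coeff_C_mul, coeff_comp_neg] at hcoeff
  have hsign : (-1:ℚ)^(p+1) * (-1)^j = -1 := by
    rw [← pow_add]
    apply Odd.neg_one_pow
    exact Nat.odd_iff.mpr (by omega)
  have : Q.coeff j - (-1:ℚ)^(p+1) * ((-1)^j * Q.coeff j) = 2 * Q.coeff j := by
    rw [← mul_assoc, hsign]; ring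
  rw [this] at hcoeff
  linarith

theorem stmt_17 (m : ℕ) (hm : 1 ≤ m) :
    ∃ fodd feven : ℕ → ℚ,
      ∀ n : ℕ, 1 ≤ n →
        (∑ k ∈ Finset.Icc 1 n, (k : ℚ) ^ (2 * m - 1)
            = ∑ j ∈ Finset.range (m + 1), fodd j * ((n : ℚ) + 1 / 2) ^ (2 * j)) ∧
        (∑ k ∈ Finset.Icc 1 n, (k : ℚ) ^ (2 * m)
            = ∑ j ∈ Finset.range (m + 1), feven j * ((n : ℚ) + 1 / 2) ^ (2 * j + 1)) := by
  obtain ⟨Qo, hod, hoe, hoc⟩ := lemB (2*m-1) (by omega)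
  obtain ⟨Qe, hed, hee, hec⟩ := lemB (2*m) (by omega)
  refine ⟨fun j => Qo.coeff (2*j), fun j => Qe.coeff (2*j+1), ?_⟩
  intro n _
  constructor
  · rw [← hoe n, eval_eq_sum_range' (lt_of_le_of_lt hod (by omega : 2*m-1+1 < 2*(m+1))),
      pairsum]
    apply Finset.sum_congr rfl; intro j _
    rw [hoc (2*j+1) (by omega)]
    ring
  · rw [← hee n, eval_eq_sum_range' (lt_of_le_of_lt hed (by omega : 2*m+1 < 2*(m+1))),
      pairsum]
    apply Finset.sum_congr rfl; intro j _
    rw [hec (2*j) (by omega)]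
    ring
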